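/- The number of 321-avoiding involutions in the symmetric group S_n equals the central binomial coefficient C(n, ⌊n/2⌋). -/

import Mathlib

open Finset
open scoped Classical

variable {n : ℕ}

noncomputable def cnt {n : ℕ} (T : Finset (Fin n)) (t : ℕ) : ℕ :=
  #(univ.filter (fun x : Fin n => x ∈ T ∧ (x : ℕ) < t))

lemma cnt_zero (T : Finset (Fin n)) : cnt T 0 = 0 := by simp [cnt]

lemma cnt_mono (T : Finset (Fin n)) {t t' : ℕ} (h : t ≤ t') : cnt T t ≤ cnt T t' := by
  apply card_le_card
  intro x hx
  simp only [mem_filter] at *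
  exact ⟨hx.1, hx.2.1, lt_of_lt_of_le hx.2.2 h⟩

lemma cnt_eq_card (T : Finset (Fin n)) {t : ℕ} (h : n ≤ t) : cnt T t = #T := by
  unfold cnt
  congr 1
  ext x
  simp only [mem_filter, mem_univ, true_and]
  exact ⟨fun h => h.1, fun hx => ⟨hx, lt_of_lt_of_le x.isLt h⟩⟩

lemma cnt_succ (T : Finset (Fin n)) (v : ℕ) (hv : v < n) :
    cnt T (v + 1) = cnt T v + (if (⟨v, hv⟩ : Fin n) ∈ T then 1 else 0) := by
  unfold cnt
  by_cases hm : (⟨v, hv⟩ : Fin n) ∈ T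
  · rw [if_pos hm]
    have hset : univ.filter (fun x : Fin n => x ∈ T ∧ (x : ℕ) < v + 1)
        = insert (⟨v, hv⟩ : Fin n) (univ.filter (fun x : Fin n => x ∈ T ∧ (x : ℕ) < v)) := by
      ext x
      simp only [mem_filter, mem_univ, true_and, mem_insert]
      constructor
      · rintro ⟨hxT, hlt⟩
        rcases Nat.lt_succ_iff_lt_or_eq.mp hlt with h | h
        · exact Or.inr ⟨hxT, h⟩
        · exact Or.inl (Fin.ext h)
      · rintro (rfl | ⟨hxT, hlt⟩)
        · exact ⟨hm, Nat.lt_succ_self v⟩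
        · exact ⟨hxT, Nat.lt_succ_of_lt hlt⟩
    rw [hset, card_insert_of_notMem (by simp)]
  · rw [if_neg hm]
    have hset : univ.filter (fun x : Fin n => x ∈ T ∧ (x : ℕ) < v + 1)
        = univ.filter (fun x : Fin n => x ∈ T ∧ (x : ℕ) < v) := by
      ext x
      simp only [mem_filter, mem_univ, true_and]
      constructor
      · rintro ⟨hxT, hlt⟩
        rcases Nat.lt_succ_iff_lt_or_eq.mp hlt with h | h
        · exact ⟨hxT, h⟩
        · exact absurd hxT (by rwa [show x = (⟨v, hv⟩ : Fin n) from Fin.ext h])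
      · rintro ⟨hxT, hlt⟩
        exact ⟨hxT, Nat.lt_succ_of_lt hlt⟩
    rw [hset]
    omega

lemma cnt_union (T₁ T₂ : Finset (Fin n)) (hd : Disjoint T₁ T₂) (t : ℕ) :
    cnt (T₁ ∪ T₂) t = cnt T₁ t + cnt T₂ t := by
  unfold cnt
  rw [← card_union_of_disjoint]
  · congr 1; ext x; simp only [mem_filter, mem_union, mem_univ, true_and]; tauto
  · intro a ha hb x hx
    have h1 := ha hx; have h2 := hb hx
    simp only [mem_filter] at h1 h2
    exact absurd h1.2.1 (fun h => (Finset.disjoint_left.mp hd h h2.2.1))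

lemma cnt_ext {T T' : Finset (Fin n)} (h : ∀ t, cnt T t = cnt T' t) : T = T' := by
  ext x
  have h1 := h x.val
  have h2 := h (x.val + 1)
  rw [cnt_succ T x.val x.isLt, cnt_succ T' x.val x.isLt, h1] at h2
  have : (if (⟨x.val, x.isLt⟩ : Fin n) ∈ T then 1 else 0)
      = (if (⟨x.val, x.isLt⟩ : Fin n) ∈ T' then 1 else 0) := by omega
  simp only [Fin.eta] at this
  by_cases hx : x ∈ T <;> by_cases hx' : x ∈ T' <;> simp [hx, hx'] at this ⊢ <;> tauto

/-- paths starting at height `h` staying nonnegative -/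
def Q {n : ℕ} (h : ℕ) (S : Finset (Fin n)) : Prop := ∀ t, cnt Sᶜ t ≤ h + cnt S t

noncomputable def Npath (n h : ℕ) : ℕ :=
  #((univ : Finset (Finset (Fin n))).filter (Q h))

/-- shadow of a subset of `Fin (n+1)` -/
noncomputable def tau {n : ℕ} (S : Finset (Fin (n + 1))) : Finset (Fin n) :=
  univ.filter (fun x : Fin n => x.succ ∈ S)

lemma mem_tau {S : Finset (Fin (n + 1))} {x : Fin n} : x ∈ tau S ↔ x.succ ∈ S := by
  simp [tau]

lemma tau_compl (S : Finset (Fin (n + 1))) : tau Sᶜ = (tau S)ᶜ := by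
  ext x; simp [tau]

lemma cnt_tau (S : Finset (Fin (n + 1))) (t : ℕ) :
    cnt S (t + 1) = (if (0 : Fin (n + 1)) ∈ S then 1 else 0) + cnt (tau S) t := by
  unfold cnt
  rw [card_filter, card_filter, Fin.sum_univ_succ]
  congr 1
  · simp
  · apply Finset.sum_congr rfl
    intro x _
    have : ((x.succ : Fin (n+1)) : ℕ) = (x : ℕ) + 1 := rfl
    by_cases hx : x.succ ∈ S <;> simp [hx, mem_tau, this, Nat.succ_lt_succ_iff]

lemma Q_transfer_mem {h : ℕ} {S : Finset (Fin (n + 1))} (h0 : (0 : Fin (n + 1)) ∈ S) :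
    Q h S ↔ Q (h + 1) (tau S) := by
  constructor
  · intro hQ t
    have := hQ (t + 1)
    rw [cnt_tau, cnt_tau, tau_compl] at this
    simp only [mem_compl, h0, not_true_eq_false, if_false, if_pos h0, ite_true, ite_false] at this
    omega
  · intro hQ t
    cases t with
    | zero => simp [cnt_zero]
    | succ t =>
      have := hQ t
      rw [cnt_tau, cnt_tau, tau_compl]
      simp only [mem_compl, h0, not_true_eq_false, if_false, if_pos h0, ite_true, ite_false]
      omega

lemma Q_transfer_not {h : ℕ} {S : Finset (Fin (n + 1))} (h0 : (0 : Fin (n + 1)) ∉ S) :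
    Q (h + 1) S ↔ Q h (tau S) := by
  constructor
  · intro hQ t
    have := hQ (t + 1)
    rw [cnt_tau, cnt_tau, tau_compl] at this
    simp only [mem_compl, h0, not_false_eq_true, if_true, if_neg h0, ite_true, ite_false] at this
    omega
  · intro hQ t
    cases t with
    | zero => simp [cnt_zero]
    | succ t =>
      have := hQ t
      rw [cnt_tau, cnt_tau, tau_compl]
      simp only [mem_compl, h0, not_false_eq_true, if_true, if_neg h0, ite_true, ite_false]
      omega

lemma Q_zero_not {S : Finset (Fin (n + 1))} (h0 : (0 : Fin (n + 1)) ∉ S) : ¬ Q 0 S := by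
  intro hQ
  have := hQ 1
  rw [cnt_tau, cnt_tau, tau_compl] at this
  simp only [mem_compl, h0, not_false_eq_true, if_true, if_neg h0, ite_true, ite_false, cnt_zero] at this
  omega

noncomputable def up1 (T : Finset (Fin n)) : Finset (Fin (n + 1)) := insert 0 (T.image Fin.succ)
noncomputable def up0 (T : Finset (Fin n)) : Finset (Fin (n + 1)) := T.image Fin.succ

lemma tau_up1 (T : Finset (Fin n)) : tau (up1 T) = T := by
  ext x
  simp [tau, up1, Fin.succ_ne_zero, Fin.succ_inj]

lemma tau_up0 (T : Finset (Fin n)) : tau (up0 T) = T := by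
  ext x
  simp [tau, up0, Fin.succ_inj]

lemma zero_mem_up1 (T : Finset (Fin n)) : (0 : Fin (n + 1)) ∈ up1 T := by simp [up1]

lemma zero_not_mem_up0 (T : Finset (Fin n)) : (0 : Fin (n + 1)) ∉ up0 T := by
  simp [up0]

lemma up1_tau {S : Finset (Fin (n + 1))} (h0 : (0 : Fin (n + 1)) ∈ S) : up1 (tau S) = S := by
  ext y
  induction y using Fin.cases with
  | zero => simpa [up1] using h0
  | succ x => simp [up1, tau, Fin.succ_ne_zero, Fin.succ_inj]

lemma up0_tau {S : Finset (Fin (n + 1))} (h0 : (0 : Fin (n + 1)) ∉ S) : up0 (tau S) = S := by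
  ext y
  induction y using Fin.cases with
  | zero => simpa [up0, eq_comm, Fin.succ_ne_zero] using fun h => h0 h
  | succ x => simp [up0, tau, Fin.succ_inj]

lemma Npath_succ_zero : Npath (n + 1) 0 = Npath n 1 := by
  unfold Npath
  apply Finset.card_bij' (fun S _ => tau S) (fun T _ => up1 T)
  · intro S hS
    simp only [mem_filter, mem_univ, true_and] at *
    by_cases h0 : (0 : Fin (n+1)) ∈ S
    · exact (Q_transfer_mem h0).mp hS
    · exact absurd hS (Q_zero_not h0)
  · intro T hT
    simp only [mem_filter, mem_univ, true_and] at *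
    exact (Q_transfer_mem (zero_mem_up1 T)).mpr (by rwa [tau_up1])
  · intro S hS
    simp only [mem_filter, mem_univ, true_and] at hS
    by_cases h0 : (0 : Fin (n+1)) ∈ S
    · exact up1_tau h0
    · exact absurd hS (Q_zero_not h0)
  · intro T _
    exact tau_up1 T

lemma Npath_succ_succ (h : ℕ) :
    Npath (n + 1) (h + 1) = Npath n (h + 2) + Npath n h := by
  unfold Npath
  rw [← Finset.card_filter_add_card_filter_not
    (s := (univ : Finset (Finset (Fin (n+1)))).filter (Q (h+1)))
    (p := fun S => (0 : Fin (n+1)) ∈ S)]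
  congr 1
  · rw [Finset.filter_filter]
    apply Finset.card_bij' (fun S _ => tau S) (fun T _ => up1 T)
    · intro S hS
      simp only [mem_filter, mem_univ, true_and] at *
      exact (Q_transfer_mem hS.2).mp hS.1
    · intro T hT
      simp only [mem_filter, mem_univ, true_and] at *
      refine ⟨?_, zero_mem_up1 T⟩
      exact (Q_transfer_mem (zero_mem_up1 T)).mpr (by rwa [tau_up1])
    · intro S hS
      simp only [mem_filter, mem_univ, true_and] at hS
      exact up1_tau hS.2
    · intro T _
      exact tau_up1 T
  · rw [Finset.filter_filter]
    apply Finset.card_bij' (fun S _ => tau S) (fun T _ => up0 T)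
    · intro S hS
      simp only [mem_filter, mem_univ, true_and] at *
      exact (Q_transfer_not hS.2).mp hS.1
    · intro T hT
      simp only [mem_filter, mem_univ, true_and] at *
      refine ⟨?_, zero_not_mem_up0 T⟩
      exact (Q_transfer_not (zero_not_mem_up0 T)).mpr (by rwa [tau_up0])
    · intro S hS
      simp only [mem_filter, mem_univ, true_and] at hS
      exact up0_tau hS.2
    · intro T _
      exact tau_up0 T

lemma choose_half_succ (n : ℕ) : Nat.choose n ((n + 1) / 2) = Nat.choose n (n / 2) := by
  rcases Nat.even_or_odd n with ⟨m, rfl⟩ | ⟨m, rfl⟩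
  · congr 1; omega
  · have h1 : (2 * m + 1 + 1) / 2 = m + 1 := by omega
    have h2 : (2 * m + 1) / 2 = m := by omega
    rw [h1, h2]
    have := Nat.choose_symm (n := 2 * m + 1) (k := m) (by omega)
    rw [show 2 * m + 1 - m = m + 1 from by omega] at this
    exact this

lemma Npath_formula : ∀ {n : ℕ} (h : ℕ),
    Npath n h = ∑ j ∈ range (h + 1), Nat.choose n ((n + j + 1) / 2) := by
  intro n
  induction n with
  | zero =>
    intro h
    have hall : ∀ S : Finset (Fin 0), Q h S := by
      intro S t
      have : cnt Sᶜ t = 0 := by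
        unfold cnt
        simp
      omega
    have hleft : Npath 0 h = 1 := by
      unfold Npath
      rw [Finset.filter_true_of_mem (fun S _ => hall S), Finset.card_univ, Fintype.card_finset]
      simp
    rw [hleft, Finset.sum_range_succ']
    have : ∀ j ∈ range h, Nat.choose 0 ((0 + (j + 1) + 1) / 2) = 0 := by
      intro j _
      apply Nat.choose_eq_zero_of_lt
      omega
    rw [Finset.sum_congr rfl this]
    simp
  | succ n ih =>
    intro h
    cases h with
    | zero =>
      rw [Npath_succ_zero, ih 1]
      have e1 : ∑ j ∈ range (0 + 1), Nat.choose (n + 1) ((n + 1 + j + 1) / 2)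
          = Nat.choose (n + 1) (n / 2 + 1) := by
        rw [Finset.sum_range_one]; congr 1; omega
      have e2 : ∑ j ∈ range (1 + 1), Nat.choose n ((n + j + 1) / 2)
          = Nat.choose n (n / 2) + Nat.choose n (n / 2 + 1) := by
        rw [Finset.sum_range_succ, Finset.sum_range_one]
        have f1 : (n + 0 + 1) / 2 = (n + 1) / 2 := by omega
        have f2 : (n + 1 + 1) / 2 = n / 2 + 1 := by omega
        rw [f1, f2, choose_half_succ]
      rw [e1, e2]
      exact (Nat.choose_succ_succ n (n / 2)).symm
    | succ h =>
      rw [Npath_succ_succ, ih (h + 2), ih h]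
      have hterm : ∀ j, Nat.choose (n + 1) ((n + 1 + j + 1) / 2)
          = Nat.choose n ((n + j) / 2) + Nat.choose n ((n + (j + 1) + 1) / 2) := by
        intro j
        have h1 : (n + 1 + j + 1) / 2 = (n + j) / 2 + 1 := by omega
        have h2 : (n + (j + 1) + 1) / 2 = (n + j) / 2 + 1 := by omega
        rw [h1, h2, Nat.choose_succ_succ]
      symm
      calc ∑ j ∈ range (h + 1 + 1), Nat.choose (n + 1) ((n + 1 + j + 1) / 2)
          = ∑ j ∈ range (h + 2), (Nat.choose n ((n + j) / 2)
              + Nat.choose n ((n + (j + 1) + 1) / 2)) := by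
            exact Finset.sum_congr rfl (fun j _ => hterm j)
        _ = ∑ j ∈ range (h + 2), Nat.choose n ((n + j) / 2)
              + ∑ j ∈ range (h + 2), Nat.choose n ((n + (j + 1) + 1) / 2) := by
            rw [Finset.sum_add_distrib]
        _ = ∑ j ∈ range (h + 2 + 1), Nat.choose n ((n + j + 1) / 2)
              + ∑ j ∈ range (h + 1), Nat.choose n ((n + j + 1) / 2) := by
            rw [Finset.sum_range_succ' (fun j => Nat.choose n ((n + j) / 2)) (h + 1)]
            rw [show h + 2 + 1 = (h + 2) + 1 from rfl,
              Finset.sum_range_succ' (fun j => Nat.choose n ((n + j + 1) / 2)) (h + 2)]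
            have e1 : ∀ j, Nat.choose n ((n + (j + 1)) / 2) = Nat.choose n ((n + j + 1) / 2) := by
              intro j; congr 1 <;> omega
            have e2 : (n + 0) / 2 = n / 2 := by omega
            have e3 : (n + 0 + 1) / 2 = (n + 1) / 2 := by omega
            rw [Finset.sum_congr rfl (fun j _ => e1 j), e2, e3, choose_half_succ]
            omega

lemma Npath_zero_eq : Npath n 0 = Nat.choose n (n / 2) := by
  rw [Npath_formula 0, Finset.sum_range_one]
  have : (n + 0 + 1) / 2 = (n + 1) / 2 := by omega
  rw [this, choose_half_succ]

/-! ### Permutation side -/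

section Perm
open Equiv

noncomputable def wex {n : ℕ} (z : Equiv.Perm (Fin n)) : Finset (Fin n) :=
  univ.filter (fun i => i ≤ z i)

noncomputable def ops {n : ℕ} (z : Equiv.Perm (Fin n)) : Finset (Fin n) :=
  univ.filter (fun i => i < z i)

noncomputable def fixes {n : ℕ} (z : Equiv.Perm (Fin n)) : Finset (Fin n) :=
  univ.filter (fun i => z i = i)

noncomputable def downs {n : ℕ} (z : Equiv.Perm (Fin n)) : Finset (Fin n) :=
  univ.filter (fun i => z i < i)

variable {z : Equiv.Perm (Fin n)}

lemma mem_wex {i : Fin n} : i ∈ wex z ↔ i ≤ z i := by simp [wex]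
lemma mem_ops {i : Fin n} : i ∈ ops z ↔ i < z i := by simp [ops]
lemma mem_fixes {i : Fin n} : i ∈ fixes z ↔ z i = i := by simp [fixes]
lemma mem_downs {i : Fin n} : i ∈ downs z ↔ z i < i := by simp [downs]

lemma downs_eq_compl_wex : downs z = (wex z)ᶜ := by
  ext i
  rw [Finset.mem_compl, mem_downs, mem_wex]
  exact lt_iff_not_ge

lemma wex_eq_union : wex z = ops z ∪ fixes z := by
  ext i
  simp only [mem_wex, mem_ops, mem_fixes, mem_union]
  constructor
  · intro h
    rcases lt_or_eq_of_le h with h | h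
    · exact Or.inl h
    · exact Or.inr h.symm
  · rintro (h | h)
    · exact le_of_lt h
    · exact le_of_eq h.symm

lemma ops_fixes_disj : Disjoint (ops z) (fixes z) := by
  rw [Finset.disjoint_left]
  intro i h1 h2
  rw [mem_ops] at h1; rw [mem_fixes] at h2
  exact absurd h2 (ne_of_gt h1)

variable (hz : ∀ i, z (z i) = i)
variable (hav : ∀ i j k : Fin n, i < j → j < k → z k < z j → z j < z i → False)

include hz hav in
/-- no fixed point inside an arc -/
lemma fix_not_in_arc {o f : Fin n} (h1 : o < f) (h2 : f < z o) (hf : z f = f) : False := by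
  apply hav o f (z o) h1 h2
  · rw [hz]; rw [hf]; exact h1
  · rw [hf]; exact h2

include hz hav in
lemma wex_mono {i j : Fin n} (hi : i ≤ z i) (hj : j ≤ z j) (hij : i < j) : z i < z j := by
  rcases lt_or_eq_of_le hi with hi' | hi'
  · rcases lt_or_eq_of_le hj with hj' | hj'
    · -- both strict openers
      by_contra hcon
      push_neg at hcon
      rcases lt_or_eq_of_le hcon with hlt | heq
      · exact hav j (z j) (z i) hj' hlt (by rw [hz, hz]; exact hij) (by rw [hz]; exact hj')
      · exact absurd (z.injective heq) (ne_of_gt hij)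
    · -- j fixed
      rcases lt_trichotomy (z i) j with h | h | h
      · rw [← hj']; exact h
      · exfalso
        have hxe : i = j := by rw [← hz i, h, ← hj']
        exact absurd hxe (ne_of_lt hij)
      · exact (fix_not_in_arc hz hav hij h hj'.symm).elim
  · -- i fixed
    rw [← hi']
    exact lt_of_lt_of_le hij hj

include hz hav in
lemma downs_mono {i j : Fin n} (hi : z i < i) (hj : z j < j) (hij : i < j) : z i < z j := by
  by_contra hcon
  push_neg at hcon
  rcases lt_or_eq_of_le hcon with hlt | heq
  · have := wex_mono hz hav (i := z j) (j := z i)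
      (by rw [hz]; exact le_of_lt hj) (by rw [hz]; exact le_of_lt hi) hlt
    rw [hz, hz] at this
    exact absurd hij (not_lt_of_gt this)
  · exact absurd (z.injective heq) (ne_of_gt hij)

include hz in
lemma downs_le_ops (t : ℕ) : cnt (downs z) t ≤ cnt (ops z) t := by
  unfold cnt
  apply card_le_card_of_injOn z
  · intro x hx
    simp only [Finset.mem_coe, mem_filter, mem_univ, true_and, mem_downs, mem_ops] at *
    refine ⟨by rw [hz]; exact hx.1, ?_⟩
    calc ((z x : Fin n) : ℕ) < (x : ℕ) := hx.1
      _ < t := hx.2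
  · exact fun a _ b _ h => z.injective h

include hz hav in
lemma ops_le_downs_at_fix {f : Fin n} (hf : z f = f) :
    cnt (ops z) (f : ℕ) ≤ cnt (downs z) (f : ℕ) := by
  unfold cnt
  apply card_le_card_of_injOn z
  · intro x hx
    simp only [Finset.mem_coe, mem_filter, mem_univ, true_and, mem_downs, mem_ops] at *
    have hxf : x < f := hx.2
    have h1 : z x < f := by
      rcases lt_trichotomy (z x) f with h | h | h
      · exact h
      · exfalso
        have hxe : x = f := by rw [← hz x, h, hf]
        exact absurd hxe (ne_of_lt hxf)
      · exact (fix_not_in_arc hz hav hxf h hf).elim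
    exact ⟨by rw [hz]; exact hx.1, h1⟩
  · exact fun a _ b _ h => z.injective h

include hz in
lemma card_ops_eq_downs : #(ops z) = #(downs z) := by
  apply le_antisymm
  · apply card_le_card_of_injOn z
    · intro x hx
      rw [Finset.mem_coe, mem_ops] at hx; rw [Finset.mem_coe, mem_downs, hz]; exact hx
    · exact fun a _ b _ h => z.injective h
  · apply card_le_card_of_injOn z
    · intro x hx
      rw [Finset.mem_coe, mem_downs] at hx; rw [Finset.mem_coe, mem_ops, hz]; exact hx
    · exact fun a _ b _ h => z.injective h

end Perm

section Uniq
variable {z z' : Equiv.Perm (Fin n)}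

lemma cnt_wex_split (z : Equiv.Perm (Fin n)) (t : ℕ) :
    cnt (wex z) t = cnt (ops z) t + cnt (fixes z) t := by
  rw [wex_eq_union, cnt_union _ _ ops_fixes_disj]

lemma fixes_cnt_le
    (hz : ∀ i, z (z i) = i)
    (hav : ∀ i j k : Fin n, i < j → j < k → z k < z j → z j < z i → False)
    (hz' : ∀ i, z' (z' i) = i)
    (hav' : ∀ i j k : Fin n, i < j → j < k → z' k < z' j → z' j < z' i → False)
    (hw : wex z = wex z') (v : ℕ) :
    cnt (fixes z) v ≤ cnt (fixes z') v := by
  obtain ⟨t, htv, h1, h2⟩ : ∃ t, v ≤ t ∧ cnt (ops z') t ≤ cnt (downs z') t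
      ∧ cnt (fixes z') t ≤ cnt (fixes z') v := by
    by_cases hex : ∃ f : Fin n, z' f = f ∧ v ≤ (f : ℕ)
    · have hne : (univ.filter (fun f : Fin n => z' f = f ∧ v ≤ (f : ℕ))).Nonempty := by
        obtain ⟨f, hf⟩ := hex
        exact ⟨f, by simp [hf.1, hf.2]⟩
      obtain ⟨f, hfm, hmin⟩ := Finset.exists_min_image
        (univ.filter (fun f : Fin n => z' f = f ∧ v ≤ (f : ℕ))) id hne
      simp only [mem_filter, mem_univ, true_and] at hfm
      refine ⟨(f : ℕ), hfm.2, ops_le_downs_at_fix hz' hav' hfm.1, ?_⟩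
      apply card_le_card
      intro x hx
      simp only [mem_filter, mem_univ, true_and] at hx ⊢
      refine ⟨hx.1, ?_⟩
      by_contra hcon
      push_neg at hcon
      have hxmem : x ∈ univ.filter (fun g : Fin n => z' g = g ∧ v ≤ (g : ℕ)) := by
        simp only [mem_filter, mem_univ, true_and]
        exact ⟨mem_fixes.mp hx.1, hcon⟩
      have hle : (f : ℕ) ≤ (x : ℕ) := Fin.le_def.mp (hmin x hxmem)
      exact absurd hx.2 (not_lt_of_ge hle)
    · push_neg at hex
      refine ⟨max v n, le_max_left _ _, ?_, ?_⟩
      · rw [cnt_eq_card _ (le_max_right v n), cnt_eq_card _ (le_max_right v n),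
          card_ops_eq_downs hz']
      · apply card_le_card
        intro x hx
        simp only [mem_filter, mem_univ, true_and] at *
        exact ⟨hx.1, hex x (mem_fixes.mp hx.1)⟩
  have hdowns : downs z = downs z' := by
    rw [downs_eq_compl_wex, downs_eq_compl_wex, hw]
  have c1 : cnt (fixes z) v + cnt (downs z') t ≤ cnt (wex z') t := by
    rw [← hw, cnt_wex_split, ← hdowns]
    have d1 := downs_le_ops hz t
    have d2 := cnt_mono (fixes z) htv
    have d3 : cnt (fixes z) t ≤ cnt (fixes z) t := le_refl _
    omega
  rw [cnt_wex_split] at c1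
  omega

lemma perm_eq_of_wex_eq
    (hz : ∀ i, z (z i) = i)
    (hav : ∀ i j k : Fin n, i < j → j < k → z k < z j → z j < z i → False)
    (hz' : ∀ i, z' (z' i) = i)
    (hav' : ∀ i j k : Fin n, i < j → j < k → z' k < z' j → z' j < z' i → False)
    (hw : wex z = wex z') : z = z' := by
  have hfix : fixes z = fixes z' := by
    apply cnt_ext
    intro t
    exact le_antisymm (fixes_cnt_le hz hav hz' hav' hw t)
      (fixes_cnt_le hz' hav' hz hav hw.symm t)
  have hops : ops z = ops z' := by
    have h1 : ops z = (wex z) \ (fixes z) := by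
      ext i
      simp only [mem_ops, mem_sdiff, mem_wex, mem_fixes]
      constructor
      · intro h; exact ⟨le_of_lt h, ne_of_gt h⟩
      · rintro ⟨h1, h2⟩
        exact lt_of_le_of_ne h1 (fun he => h2 he.symm)
    have h2 : ops z' = (wex z') \ (fixes z') := by
      ext i
      simp only [mem_ops, mem_sdiff, mem_wex, mem_fixes]
      constructor
      · intro h; exact ⟨le_of_lt h, ne_of_gt h⟩
      · rintro ⟨h1, h2⟩
        exact lt_of_le_of_ne h1 (fun he => h2 he.symm)
    rw [h1, h2, hw, hfix]
  have hdowns : downs z = downs z' := by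
    rw [downs_eq_compl_wex, downs_eq_compl_wex, hw]
  -- order embedding uniqueness on openers
  have hkd : #(downs z) = #(ops z) := (card_ops_eq_downs hz).symm
  set e := (ops z).orderEmbOfFin (rfl : #(ops z) = #(ops z)) with hedef
  have hmem : ∀ i, e i ∈ ops z := fun i => Finset.orderEmbOfFin_mem _ _ i
  have huniq : ∀ (w : Equiv.Perm (Fin n)), (∀ i, w (w i) = i) →
      (∀ i j k : Fin n, i < j → j < k → w k < w j → w j < w i → False) →
      ops w = ops z → downs w = downs z →
      (fun i => w (e i)) = ⇑((downs z).orderEmbOfFin hkd) := by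
    intro w hwz hwav hops' hdw
    apply Finset.orderEmbOfFin_unique
    · intro i
      have h : e i ∈ ops w := by rw [hops']; exact hmem i
      rw [← hdw, mem_downs, hwz]
      exact mem_ops.mp h
    · intro i j hij
      have hi : e i ∈ ops w := by rw [hops']; exact hmem i
      have hj : e j ∈ ops w := by rw [hops']; exact hmem j
      exact wex_mono hwz hwav (le_of_lt (mem_ops.mp hi)) (le_of_lt (mem_ops.mp hj))
        (e.strictMono hij)
  have h1 := huniq z hz hav rfl rfl
  have h2 := huniq z' hz' hav' hops.symm hdowns.symm
  have hopseq : ∀ o ∈ ops z, z o = z' o := by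
    intro o ho
    obtain ⟨i, hi⟩ : ∃ i, e i = o := by
      have hr := Finset.range_orderEmbOfFin (ops z) (rfl : #(ops z) = #(ops z))
      have : o ∈ Set.range e := by rw [hedef, hr]; exact ho
      exact this
    rw [← hi]
    calc z (e i) = (downs z).orderEmbOfFin hkd i := congrFun h1 i
      _ = z' (e i) := (congrFun h2 i).symm
  apply Equiv.ext
  intro x
  rcases lt_trichotomy (z x) x with h | h | h
  · -- x ∈ downs
    have ho : z x ∈ ops z := by rw [mem_ops, hz]; exact h
    have hx1 : z' (z x) = x := by rw [← hopseq _ ho, hz]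
    calc z x = z' (z' (z x)) := (hz' (z x)).symm
      _ = z' x := by rw [hx1]
  · -- fixed
    have : x ∈ fixes z := mem_fixes.mpr h
    rw [hfix, mem_fixes] at this
    rw [h, this]
  · exact hopseq x (mem_ops.mpr h)

end Uniq

/-! ### Construction of the involution from a path -/

section Emb

lemma card_filter_lt_fin (k : ℕ) (i : Fin k) :
    #(univ.filter (fun j : Fin k => j < i)) = (i : ℕ) := by
  rw [show (univ.filter (fun j : Fin k => j < i)) = Finset.Iio i from by ext j; simp]
  simp

lemma card_filter_le_fin (k : ℕ) (i : Fin k) :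
    #(univ.filter (fun j : Fin k => j ≤ i)) = (i : ℕ) + 1 := by
  rw [show (univ.filter (fun j : Fin k => j ≤ i)) = Finset.Iic i from by ext j; simp]
  simp

lemma emb_lt_of_lt_cnt {T : Finset (Fin n)} {k : ℕ} (hT : #T = k) (i : Fin k) {t : ℕ}
    (h : (i : ℕ) < cnt T t) : ((T.orderEmbOfFin hT i : Fin n) : ℕ) < t := by
  by_contra hcon
  push_neg at hcon
  have hsub : univ.filter (fun x : Fin n => x ∈ T ∧ (x : ℕ) < t) ⊆
      (univ.filter (fun j : Fin k => j < i)).image (T.orderEmbOfFin hT) := by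
    intro y hy
    simp only [mem_filter, mem_univ, true_and] at hy
    obtain ⟨j, hj⟩ : ∃ j, T.orderEmbOfFin hT j = y := by
      have : y ∈ Set.range (T.orderEmbOfFin hT) := by
        rw [Finset.range_orderEmbOfFin]; exact hy.1
      exact this
    rw [mem_image]
    refine ⟨j, ?_, hj⟩
    simp only [mem_filter, mem_univ, true_and]
    have hlt : (T.orderEmbOfFin hT) j < (T.orderEmbOfFin hT) i := by
      rw [hj]
      rw [Fin.lt_def]
      exact lt_of_lt_of_le hy.2 hcon
    exact (T.orderEmbOfFin hT).strictMono.lt_iff_lt.mp hlt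
  have hcard := card_le_card hsub
  rw [Finset.card_image_of_injective _ (T.orderEmbOfFin hT).injective,
    card_filter_lt_fin] at hcard
  unfold cnt at h
  omega

lemma lt_cnt_of_emb_lt {T : Finset (Fin n)} {k : ℕ} (hT : #T = k) (i : Fin k) {t : ℕ}
    (h : ((T.orderEmbOfFin hT i : Fin n) : ℕ) < t) : (i : ℕ) < cnt T t := by
  have hsub : (univ.filter (fun j : Fin k => j ≤ i)).image (T.orderEmbOfFin hT) ⊆
      univ.filter (fun x : Fin n => x ∈ T ∧ (x : ℕ) < t) := by
    intro y hy
    rw [mem_image] at hy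
    obtain ⟨j, hjm, hj⟩ := hy
    simp only [mem_filter, mem_univ, true_and] at hjm ⊢
    subst hj
    refine ⟨Finset.orderEmbOfFin_mem _ _ _, ?_⟩
    have : (T.orderEmbOfFin hT) j ≤ (T.orderEmbOfFin hT) i :=
      (T.orderEmbOfFin hT).monotone hjm
    exact lt_of_le_of_lt (Fin.le_def.mp this) h
  have hcard := card_le_card hsub
  rw [Finset.card_image_of_injective _ (T.orderEmbOfFin hT).injective,
    card_filter_le_fin] at hcard
  unfold cnt
  omega

end Emb

section Psi
variable {S : Finset (Fin n)}

noncomputable def htZ (S : Finset (Fin n)) (t : ℕ) : ℤ := (cnt S t : ℤ) - (cnt Sᶜ t : ℤ)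

noncomputable def mf (S : Finset (Fin n)) (v : ℕ) : ℤ :=
  (Finset.Icc (min v n) n).inf' (Finset.nonempty_Icc.mpr (min_le_right v n)) (htZ S)

lemma ht_nonneg (hS : Q 0 S) (t : ℕ) : 0 ≤ htZ S t := by
  have := hS t
  unfold htZ
  omega

lemma mf_le {v t : ℕ} (hv : v ≤ t) (ht : t ≤ n) : mf S v ≤ htZ S t := by
  apply Finset.inf'_le
  rw [Finset.mem_Icc]
  exact ⟨le_trans (min_le_left v n) hv, ht⟩

lemma mf_nonneg (hS : Q 0 S) (v : ℕ) : 0 ≤ mf S v :=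
  Finset.le_inf' _ _ (fun t _ => ht_nonneg hS t)

lemma mf_mono {v w : ℕ} (hvw : v ≤ w) (hw : w ≤ n) : mf S v ≤ mf S w := by
  apply Finset.le_inf'
  intro t ht
  rw [Finset.mem_Icc] at ht
  exact mf_le (le_trans hvw (le_trans (by rw [min_eq_left hw]) ht.1)) ht.2

lemma mf_rec {v : ℕ} (hv : v < n) : mf S v = min (htZ S v) (mf S (v + 1)) := by
  apply le_antisymm
  · exact le_min (mf_le le_rfl hv.le) (mf_mono (Nat.le_succ v) hv)
  · apply Finset.le_inf'
    intro t ht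
    rw [Finset.mem_Icc, min_eq_left hv.le] at ht
    rcases Nat.lt_or_ge t (v + 1) with h | h
    · have : t = v := by omega
      subst this
      exact min_le_left _ _
    · exact le_trans (min_le_right _ _) (mf_le h ht.2)

lemma ht_succ {v : ℕ} (hv : v < n) :
    (⟨v, hv⟩ : Fin n) ∈ S ∧ htZ S (v + 1) = htZ S v + 1 ∨
    (⟨v, hv⟩ : Fin n) ∉ S ∧ htZ S (v + 1) = htZ S v - 1 := by
  have h1 := cnt_succ S v hv
  have h2 := cnt_succ Sᶜ v hv
  by_cases hm : (⟨v, hv⟩ : Fin n) ∈ S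
  · left
    refine ⟨hm, ?_⟩
    rw [if_pos hm] at h1
    rw [if_neg (by simp [hm])] at h2
    unfold htZ
    omega
  · right
    refine ⟨hm, ?_⟩
    rw [if_neg hm] at h1
    rw [if_pos (Finset.mem_compl.mpr hm)] at h2
    unfold htZ
    omega

lemma mf_succ_le {v : ℕ} (hv : v < n) : mf S (v + 1) ≤ mf S v + 1 := by
  have hrec := mf_rec (S := S) hv
  have hle : mf S (v + 1) ≤ htZ S (v + 1) := mf_le (le_refl (v + 1)) (by omega : v + 1 ≤ n)
  rcases ht_succ (S := S) hv with ⟨_, h⟩ | ⟨_, h⟩ <;>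
    rcases min_cases (htZ S v) (mf S (v + 1)) with ⟨h1, h2⟩ | ⟨h1, h2⟩ <;>
    rw [h1] at hrec <;> omega

lemma mf_step {v : ℕ} (hv : v < n) :
    mf S (v + 1) = mf S v ∨ mf S (v + 1) = mf S v + 1 := by
  have h1 := mf_mono (S := S) (show v ≤ v + 1 by omega) (show v + 1 ≤ n by omega)
  have h2 := mf_succ_le (S := S) hv
  omega

lemma mf_zero (hS : Q 0 S) : mf S 0 = 0 := by
  apply le_antisymm
  · have : htZ S 0 = 0 := by unfold htZ; rw [cnt_zero, cnt_zero]; ring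
    calc mf S 0 ≤ htZ S 0 := mf_le (le_refl 0) (Nat.zero_le n)
      _ = 0 := this
  · exact mf_nonneg hS 0

lemma mf_last : mf S n = htZ S n := by
  apply le_antisymm
  · exact mf_le le_rfl le_rfl
  · apply Finset.le_inf'
    intro t ht
    rw [Finset.mem_Icc, min_self] at ht
    have : t = n := le_antisymm ht.2 ht.1
    rw [this]

noncomputable def Fx (S : Finset (Fin n)) : Finset (Fin n) :=
  univ.filter (fun x : Fin n => mf S ((x : ℕ) + 1) = mf S (x : ℕ) + 1)

lemma mem_Fx {x : Fin n} : x ∈ Fx S ↔ mf S ((x : ℕ) + 1) = mf S (x : ℕ) + 1 := by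
  simp [Fx]

lemma cnt_Fx : ∀ {v : ℕ}, v ≤ n → (cnt (Fx S) v : ℤ) = mf S v → True := fun _ _ => trivial

lemma cnt_Fx_eq (hS : Q 0 S) : ∀ v, v ≤ n → (cnt (Fx S) v : ℤ) = mf S v := by
  intro v
  induction v with
  | zero => intro _; rw [cnt_zero, mf_zero hS]; rfl
  | succ v ih =>
    intro hv
    have hvn : v < n := hv
    have h1 := cnt_succ (Fx S) v hvn
    have h2 := ih (le_of_lt hvn)
    by_cases hm : (⟨v, hvn⟩ : Fin n) ∈ Fx S
    · have := mem_Fx.mp hm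
      simp only [Fin.val_mk] at this  -- coe of ⟨v,hvn⟩ is v
      rw [if_pos hm] at h1
      rw [h1]
      push_cast
      rw [h2, this]
    · have hne : ¬ mf S (v + 1) = mf S v + 1 := by
        intro hcon
        exact hm (mem_Fx.mpr (by simpa using hcon))
      have := mf_step (S := S) hvn
      rw [if_neg hm] at h1
      rw [h1]
      push_cast
      rw [h2]
      omega

lemma Fx_subset (hS : Q 0 S) : Fx S ⊆ S := by
  intro x hx
  have hm := mem_Fx.mp hx
  by_contra hnS
  have hrec := mf_rec (S := S) x.isLt
  have hle : mf S ((x : ℕ) + 1) ≤ htZ S ((x : ℕ) + 1) :=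
    mf_le (le_refl ((x : ℕ) + 1)) (by omega : (x : ℕ) + 1 ≤ n)
  rcases ht_succ (S := S) x.isLt with ⟨hmem, _⟩ | ⟨_, h⟩
  · exact hnS (by simpa using hmem)
  · rcases min_cases (htZ S (x : ℕ)) (mf S ((x : ℕ) + 1)) with ⟨h1, h2⟩ | ⟨h1, h2⟩ <;>
      rw [h1] at hrec <;> omega

lemma ground (x : Fin n) (hx : x ∈ Fx S) : htZ S (x : ℕ) = mf S (x : ℕ) := by
  have hm := mem_Fx.mp hx
  have hrec := mf_rec (S := S) x.isLt
  rcases min_cases (htZ S (x : ℕ)) (mf S ((x : ℕ) + 1)) with ⟨h1, h2⟩ | ⟨h1, h2⟩ <;>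
    rw [h1] at hrec <;> omega

noncomputable def Ops (S : Finset (Fin n)) : Finset (Fin n) := S \ Fx S

lemma cnt_S_split (hS : Q 0 S) (v : ℕ) (hv : v ≤ n) :
    (cnt (Ops S) v : ℤ) = (cnt S v : ℤ) - mf S v := by
  have : cnt S v = cnt (Ops S) v + cnt (Fx S) v := by
    conv_lhs => rw [show S = Ops S ∪ Fx S from (Finset.sdiff_union_of_subset (Fx_subset hS)).symm]
    exact cnt_union _ _ Finset.sdiff_disjoint v
  rw [this]
  push_cast
  rw [cnt_Fx_eq hS v hv]
  ring

lemma cnt_D_le_O (hS : Q 0 S) (v : ℕ) (hv : v ≤ n) : cnt Sᶜ v ≤ cnt (Ops S) v := by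
  have h1 := cnt_S_split hS v hv
  have h2 : mf S v ≤ htZ S v := mf_le le_rfl hv
  unfold htZ at h2
  omega

lemma card_O_eq_D (hS : Q 0 S) : #(Ops S) = #Sᶜ := by
  have h1 := cnt_S_split hS n le_rfl
  have h2 := mf_last (S := S)
  unfold htZ at h2
  rw [cnt_eq_card _ le_rfl, cnt_eq_card _ le_rfl] at h1
  rw [cnt_eq_card _ le_rfl, cnt_eq_card _ le_rfl] at h2
  omega

end Psi

section PsiPerm
variable {S : Finset (Fin n)}

noncomputable def psiFun (S : Finset (Fin n)) (hc : #(Ops S) = #Sᶜ) : Fin n → Fin n :=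
  fun x =>
    if hx : x ∈ Ops S then (Sᶜ.orderEmbOfFin rfl) (((Ops S).orderIsoOfFin hc).symm ⟨x, hx⟩)
    else if hx' : x ∈ Sᶜ then ((Ops S).orderEmbOfFin hc) ((Sᶜ.orderIsoOfFin rfl).symm ⟨x, hx'⟩)
    else x

variable (hc : #(Ops S) = #Sᶜ)

lemma ops_not_mem_compl {x : Fin n} (hx : x ∈ Ops S) : x ∉ Sᶜ := by
  rw [Finset.mem_compl]
  intro h
  exact h (Finset.sdiff_subset hx)

lemma iso_symm_emb (T : Finset (Fin n)) {k : ℕ} (h : #T = k) (j : Fin k)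
    (hm : T.orderEmbOfFin h j ∈ T) :
    (T.orderIsoOfFin h).symm ⟨T.orderEmbOfFin h j, hm⟩ = j := by
  have : (T.orderIsoOfFin h) j = ⟨T.orderEmbOfFin h j, hm⟩ :=
    Subtype.ext (Finset.coe_orderIsoOfFin_apply T h j)
  rw [← this, OrderIso.symm_apply_apply]

lemma psiFun_mem_O {x : Fin n} (hx : x ∈ Ops S) :
    psiFun S hc x = (Sᶜ.orderEmbOfFin rfl) (((Ops S).orderIsoOfFin hc).symm ⟨x, hx⟩) := by
  rw [psiFun, dif_pos hx]

lemma psiFun_mem_D {x : Fin n} (hx : x ∈ Sᶜ) :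
    psiFun S hc x = ((Ops S).orderEmbOfFin hc) ((Sᶜ.orderIsoOfFin rfl).symm ⟨x, hx⟩) := by
  rw [psiFun, dif_neg (fun h => ops_not_mem_compl h hx), dif_pos hx]

lemma psiFun_fix {x : Fin n} (hx1 : x ∉ Ops S) (hx2 : x ∉ Sᶜ) : psiFun S hc x = x := by
  rw [psiFun, dif_neg hx1, dif_neg hx2]

lemma psiFun_emb (j : Fin #Sᶜ) :
    psiFun S hc ((Ops S).orderEmbOfFin hc j) = Sᶜ.orderEmbOfFin rfl j := by
  rw [psiFun_mem_O hc (Finset.orderEmbOfFin_mem _ _ _), iso_symm_emb]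

lemma psiFun_emb' (j : Fin #Sᶜ) :
    psiFun S hc (Sᶜ.orderEmbOfFin rfl j) = (Ops S).orderEmbOfFin hc j := by
  rw [psiFun_mem_D hc (Finset.orderEmbOfFin_mem _ _ _), iso_symm_emb]

lemma psiFun_invol : Function.Involutive (psiFun S hc) := by
  intro x
  by_cases hx : x ∈ Ops S
  · obtain ⟨j, hj⟩ : ∃ j, (Ops S).orderEmbOfFin hc j = x := by
      have : x ∈ Set.range ((Ops S).orderEmbOfFin hc) := by
        rw [Finset.range_orderEmbOfFin]; exact hx
      exact this
    rw [← hj, psiFun_emb, psiFun_emb']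
  · by_cases hx' : x ∈ Sᶜ
    · obtain ⟨j, hj⟩ : ∃ j, Sᶜ.orderEmbOfFin rfl j = x := by
        have : x ∈ Set.range (Sᶜ.orderEmbOfFin rfl) := by
          rw [Finset.range_orderEmbOfFin]; exact hx'
        exact this
      rw [← hj, psiFun_emb', psiFun_emb]
    · rw [psiFun_fix hc hx hx', psiFun_fix hc hx hx']

variable (hS : Q 0 S)

include hS in
lemma arc_lt (j : Fin #Sᶜ) :
    ((Ops S).orderEmbOfFin hc j : Fin n) < (Sᶜ.orderEmbOfFin rfl j : Fin n) := by
  set d := Sᶜ.orderEmbOfFin rfl j with hd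
  have h1 : (j : ℕ) < cnt Sᶜ ((d : ℕ) + 1) := lt_cnt_of_emb_lt rfl j (by omega)
  have hdn : (d : ℕ) + 1 ≤ n := d.isLt
  have h2 : (j : ℕ) < cnt (Ops S) ((d : ℕ) + 1) :=
    lt_of_lt_of_le h1 (cnt_D_le_O hS _ hdn)
  have h3 := emb_lt_of_lt_cnt hc j h2
  have hne : ((Ops S).orderEmbOfFin hc j : Fin n) ≠ d := by
    intro he
    have := ops_not_mem_compl (S := S) (Finset.orderEmbOfFin_mem (Ops S) hc j)
    rw [he] at this
    exact this (Finset.orderEmbOfFin_mem _ _ _)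
  rw [Fin.lt_def]
  rcases lt_or_eq_of_le (Nat.lt_succ_iff.mp h3) with h | h
  · exact h
  · exact absurd (Fin.ext h) hne

include hS in
lemma no_span_fix {f : Fin n} (hf : f ∈ Fx S) (j : Fin #Sᶜ)
    (hj : ((Ops S).orderEmbOfFin hc j : Fin n) < f) :
    (Sᶜ.orderEmbOfFin rfl j : Fin n) < f := by
  have hg := ground (S := S) f hf
  have hsplit := cnt_S_split hS (f : ℕ) (le_of_lt f.isLt)
  have heq : cnt (Ops S) (f : ℕ) = cnt Sᶜ (f : ℕ) := by
    unfold htZ at hg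
    omega
  have h1 : (j : ℕ) < cnt (Ops S) (f : ℕ) := lt_cnt_of_emb_lt hc j hj
  rw [heq] at h1
  have := emb_lt_of_lt_cnt rfl j h1
  rwa [Fin.lt_def]

lemma mem_S_iff_O_or_F (hS : Q 0 S) {x : Fin n} : x ∈ S ↔ x ∈ Ops S ∨ x ∈ Fx S := by
  constructor
  · intro h
    by_cases hf : x ∈ Fx S
    · exact Or.inr hf
    · exact Or.inl (Finset.mem_sdiff.mpr ⟨h, hf⟩)
  · rintro (h | h)
    · exact Finset.sdiff_subset h
    · exact Fx_subset hS h

include hS hc in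
lemma psiFun_wexact (x : Fin n) : (x ∈ S → x ≤ psiFun S hc x) ∧ (x ∉ S → psiFun S hc x < x) := by
  constructor
  · intro hxS
    rcases (mem_S_iff_O_or_F hS).mp hxS with hx | hx
    · obtain ⟨j, hj⟩ : ∃ j, (Ops S).orderEmbOfFin hc j = x := by
        have : x ∈ Set.range ((Ops S).orderEmbOfFin hc) := by
          rw [Finset.range_orderEmbOfFin]; exact hx
        exact this
      rw [← hj, psiFun_emb]
      exact le_of_lt (arc_lt hc hS j)
    · have h1 : x ∉ Ops S := fun h => (Finset.mem_sdiff.mp h).2 hx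
      have h2 : x ∉ Sᶜ := by rw [Finset.mem_compl]; exact fun h => h hxS
      rw [psiFun_fix hc h1 h2]
  · intro hxS
    have hx : x ∈ Sᶜ := Finset.mem_compl.mpr hxS
    obtain ⟨j, hj⟩ : ∃ j, Sᶜ.orderEmbOfFin rfl j = x := by
      have : x ∈ Set.range (Sᶜ.orderEmbOfFin rfl) := by
        rw [Finset.range_orderEmbOfFin]; exact hx
      exact this
    rw [← hj, psiFun_emb']
    exact arc_lt hc hS j

include hS hc in
lemma psiFun_mono_S {x y : Fin n} (hx : x ∈ S) (hy : y ∈ S) (hxy : x < y) :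
    psiFun S hc x < psiFun S hc y := by
  rcases (mem_S_iff_O_or_F hS).mp hx with hx' | hx' <;>
    rcases (mem_S_iff_O_or_F hS).mp hy with hy' | hy'
  · -- both openers
    obtain ⟨i, hi⟩ : ∃ i, (Ops S).orderEmbOfFin hc i = x := by
      have : x ∈ Set.range ((Ops S).orderEmbOfFin hc) := by
        rw [Finset.range_orderEmbOfFin]; exact hx'
      exact this
    obtain ⟨j, hj⟩ : ∃ j, (Ops S).orderEmbOfFin hc j = y := by
      have : y ∈ Set.range ((Ops S).orderEmbOfFin hc) := by
        rw [Finset.range_orderEmbOfFin]; exact hy'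
      exact this
    have hij : i < j := by
      apply ((Ops S).orderEmbOfFin hc).strictMono.lt_iff_lt.mp
      rw [hi, hj]; exact hxy
    rw [← hi, ← hj, psiFun_emb, psiFun_emb]
    exact (Sᶜ.orderEmbOfFin rfl).strictMono hij
  · -- x opener, y fixed
    obtain ⟨i, hi⟩ : ∃ i, (Ops S).orderEmbOfFin hc i = x := by
      have : x ∈ Set.range ((Ops S).orderEmbOfFin hc) := by
        rw [Finset.range_orderEmbOfFin]; exact hx'
      exact this
    have h1 : y ∉ Ops S := fun h => (Finset.mem_sdiff.mp h).2 hy'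
    have h2 : y ∉ Sᶜ := by rw [Finset.mem_compl]; exact fun h => h hy
    rw [psiFun_fix hc h1 h2, ← hi, psiFun_emb]
    apply no_span_fix hc hS hy' i
    rw [hi]; exact hxy
  · -- x fixed, y opener
    have h1 : x ∉ Ops S := fun h => (Finset.mem_sdiff.mp h).2 hx'
    have h2 : x ∉ Sᶜ := by rw [Finset.mem_compl]; exact fun h => h hx
    rw [psiFun_fix hc h1 h2]
    obtain ⟨j, hj⟩ : ∃ j, (Ops S).orderEmbOfFin hc j = y := by
      have : y ∈ Set.range ((Ops S).orderEmbOfFin hc) := by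
        rw [Finset.range_orderEmbOfFin]; exact hy'
      exact this
    rw [← hj, psiFun_emb]
    calc x < y := hxy
      _ ≤ Sᶜ.orderEmbOfFin rfl j := by rw [← hj]; exact le_of_lt (arc_lt hc hS j)
  · -- both fixed
    have h1 : x ∉ Ops S := fun h => (Finset.mem_sdiff.mp h).2 hx'
    have h2 : x ∉ Sᶜ := by rw [Finset.mem_compl]; exact fun h => h hx
    have h3 : y ∉ Ops S := fun h => (Finset.mem_sdiff.mp h).2 hy'
    have h4 : y ∉ Sᶜ := by rw [Finset.mem_compl]; exact fun h => h hy
    rw [psiFun_fix hc h1 h2, psiFun_fix hc h3 h4]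
    exact hxy

include hc in
lemma psiFun_mono_D {x y : Fin n} (hx : x ∉ S) (hy : y ∉ S) (hxy : x < y) :
    psiFun S hc x < psiFun S hc y := by
  have hx' : x ∈ Sᶜ := Finset.mem_compl.mpr hx
  have hy' : y ∈ Sᶜ := Finset.mem_compl.mpr hy
  obtain ⟨i, hi⟩ : ∃ i, Sᶜ.orderEmbOfFin rfl i = x := by
    have : x ∈ Set.range (Sᶜ.orderEmbOfFin rfl) := by
      rw [Finset.range_orderEmbOfFin]; exact hx'
    exact this
  obtain ⟨j, hj⟩ : ∃ j, Sᶜ.orderEmbOfFin rfl j = y := by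
    have : y ∈ Set.range (Sᶜ.orderEmbOfFin rfl) := by
      rw [Finset.range_orderEmbOfFin]; exact hy'
    exact this
  have hij : i < j := by
    apply (Sᶜ.orderEmbOfFin rfl).strictMono.lt_iff_lt.mp
    rw [hi, hj]; exact hxy
  rw [← hi, ← hj, psiFun_emb', psiFun_emb']
  exact ((Ops S).orderEmbOfFin hc).strictMono hij

end PsiPerm

section Assemble

lemma cnt_subset {T T' : Finset (Fin n)} (hsub : T ⊆ T') (t : ℕ) : cnt T t ≤ cnt T' t := by
  apply card_le_card
  intro x hx
  simp only [mem_filter, mem_univ, true_and] at *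
  exact ⟨hsub hx.1, hx.2⟩

lemma wex_Q {z : Equiv.Perm (Fin n)} (hz : ∀ i, z (z i) = i) : Q 0 (wex z) := by
  intro t
  rw [← downs_eq_compl_wex]
  calc cnt (downs z) t ≤ cnt (ops z) t := downs_le_ops hz t
    _ ≤ cnt (wex z) t := cnt_subset (by rw [wex_eq_union]; exact Finset.subset_union_left) t
    _ ≤ 0 + cnt (wex z) t := by omega

lemma no321 (f : Fin n → Fin n) (S : Finset (Fin n))
    (h1 : ∀ x, x ∈ S → x ≤ f x) (h2 : ∀ x, x ∉ S → f x < x)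
    (hm1 : ∀ x y, x ∈ S → y ∈ S → x < y → f x < f y)
    (hm2 : ∀ x y, x ∉ S → y ∉ S → x < y → f x < f y) :
    ∀ i j k : Fin n, i < j → j < k → f k < f j → f j < f i → False := by
  intro i j k hij hjk hkj hji
  by_cases hjS : j ∈ S
  · by_cases hiS : i ∈ S
    · exact absurd (hm1 i j hiS hjS hij) (not_lt_of_gt hji)
    · have := lt_of_lt_of_le (lt_trans (lt_trans hji (h2 i hiS)) hij) (h1 j hjS)
      exact lt_irrefl _ this
  · by_cases hkS : k ∈ S
    · have := lt_of_lt_of_le (lt_trans (lt_trans hkj (h2 j hjS)) hjk) (h1 k hkS)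
      exact lt_irrefl _ this
    · exact absurd (hm2 j k hjS hkS hjk) (not_lt_of_gt hkj)

noncomputable def psiPerm (S : Finset (Fin n)) (hc : #(Ops S) = #Sᶜ) : Equiv.Perm (Fin n) :=
  Function.Involutive.toPerm (psiFun S hc) (psiFun_invol hc)

lemma psiPerm_apply (S : Finset (Fin n)) (hc : #(Ops S) = #Sᶜ) (x : Fin n) :
    psiPerm S hc x = psiFun S hc x := by
  unfold psiPerm
  rw [Function.Involutive.coe_toPerm]

lemma wex_psiPerm (S : Finset (Fin n)) (hc : #(Ops S) = #Sᶜ) (hS : Q 0 S) :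
    wex (psiPerm S hc) = S := by
  ext x
  rw [mem_wex, psiPerm_apply]
  constructor
  · intro h
    by_contra hxS
    exact absurd h (not_le_of_gt ((psiFun_wexact hc hS x).2 hxS))
  · exact (psiFun_wexact hc hS x).1

end Assemble

/-- The number of 321-avoiding involutions in the symmetric group `S_n`
equals the central binomial coefficient `C(n, ⌊n/2⌋)`. -/
theorem stmt_15 (n : ℕ) :
    {z : Equiv.Perm (Fin n) | z * z = 1 ∧
      ¬∃ i j k : Fin n, i < j ∧ j < k ∧ z k < z j ∧ z j < z i}.ncard
    = Nat.choose n (n / 2) := by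
  classical
  have hset : {z : Equiv.Perm (Fin n) | z * z = 1 ∧
      ¬∃ i j k : Fin n, i < j ∧ j < k ∧ z k < z j ∧ z j < z i}
      = ↑((univ : Finset (Equiv.Perm (Fin n))).filter
        (fun z => z * z = 1 ∧ ¬∃ i j k : Fin n, i < j ∧ j < k ∧ z k < z j ∧ z j < z i)) := by
    ext z
    simp
  rw [hset, Set.ncard_coe_finset]
  have hconv : ∀ z : Equiv.Perm (Fin n),
      (z * z = 1 ∧ ¬∃ i j k : Fin n, i < j ∧ j < k ∧ z k < z j ∧ z j < z i) →
      (∀ i, z (z i) = i) ∧ (∀ i j k : Fin n, i < j → j < k → z k < z j → z j < z i → False) := by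
    intro z hz
    constructor
    · intro i
      have := Equiv.ext_iff.mp hz.1 i
      rwa [Equiv.Perm.mul_apply, Equiv.Perm.one_apply] at this
    · intro i j k hij hjk h1 h2
      exact hz.2 ⟨i, j, k, hij, hjk, h1, h2⟩
  have hcard : #((univ : Finset (Equiv.Perm (Fin n))).filter
        (fun z => z * z = 1 ∧ ¬∃ i j k : Fin n, i < j ∧ j < k ∧ z k < z j ∧ z j < z i))
      = Npath n 0 := by
    unfold Npath
    apply le_antisymm
    · apply card_le_card_of_injOn (fun z => wex z)
      · intro z hzmem
        simp only [Finset.mem_coe, mem_filter, mem_univ, true_and] at hzmem ⊢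
        exact wex_Q (hconv z hzmem).1
      · intro z hz' z' hz'' heq
        simp only [coe_filter, mem_univ, true_and, Set.mem_setOf_eq] at hz' hz''
        obtain ⟨h1, h2⟩ := hconv z hz'
        obtain ⟨h1', h2'⟩ := hconv z' hz''
        exact perm_eq_of_wex_eq h1 h2 h1' h2' heq
    · apply card_le_card_of_injOn
        (fun S => if h : #(Ops S) = #Sᶜ then psiPerm S h else 1)
      · intro S hSmem
        simp only [Finset.mem_coe, mem_filter, mem_univ, true_and] at hSmem ⊢
        have hc := card_O_eq_D hSmem
        rw [dif_pos hc]
        constructor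
        · apply Equiv.ext
          intro x
          rw [Equiv.Perm.mul_apply, Equiv.Perm.one_apply, psiPerm_apply, psiPerm_apply]
          exact psiFun_invol hc x
        · rintro ⟨i, j, k, hij, hjk, h1, h2⟩
          rw [psiPerm_apply, psiPerm_apply] at h1
          rw [psiPerm_apply, psiPerm_apply] at h2
          exact no321 (psiFun S hc) S
            (fun x hx => (psiFun_wexact hc hSmem x).1 hx)
            (fun x hx => (psiFun_wexact hc hSmem x).2 hx)
            (fun x y hx hy hxy => psiFun_mono_S hc hSmem hx hy hxy)
            (fun x y hx hy hxy => psiFun_mono_D hc hx hy hxy)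
            i j k hij hjk h1 h2
      · intro S hS' S' hS'' heq
        simp only [coe_filter, mem_univ, true_and, Set.mem_setOf_eq] at hS' hS''
        have hc := card_O_eq_D hS'
        have hc' := card_O_eq_D hS''
        simp only [dif_pos hc, dif_pos hc'] at heq
        calc S = wex (psiPerm S hc) := (wex_psiPerm S hc hS').symm
          _ = wex (psiPerm S' hc') := by rw [heq]
          _ = S' := wex_psiPerm S' hc' hS''
  rw [hcard, Npath_zero_eq]
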